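/- arXiv:2202.07992 — 4 statements merged into one kernel-verified Lean document; each statement's English description precedes it below -/
import Mathlib

section
/- Let q be a positive natural number and let x, y ∈ ℝ^n be vectors such that x_i·y_i ≠ 0 for some index i and y_j ≠ 0 for some index j. Then (∑_{i=1}^n |x_i|^{2q+1} y_i²) / (∑_{i=1}^n |x_i|^{2q} y_i²) ≥ ((∑_{i=1}^n |x_i|^{2q} y_i²) / (∑_{i=1}^n y_i²))^{1/(2q)}. -/
/-- Hölder-type inequality for weighted power sums (Lemma in the paper). -/
theorem stmt_0 (n q : ℕ) (hq : 1 ≤ q) (x y : Fin n → ℝ)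
    (hxy : ∃ i, x i * y i ≠ 0) (hy : ∃ j, y j ≠ 0) :
    (∑ i, |x i| ^ (2 * q + 1) * (y i) ^ 2) / (∑ i, |x i| ^ (2 * q) * (y i) ^ 2) ≥
      ((∑ i, |x i| ^ (2 * q) * (y i) ^ 2) / (∑ i, (y i) ^ 2)) ^ ((1 : ℝ) / (2 * q)) := by
  obtain ⟨i0, hi0⟩ := hxy
  obtain ⟨j0, hj0⟩ := hy
  have hx0 : x i0 ≠ 0 := fun h => hi0 (by simp [h])
  have hy0 : y i0 ≠ 0 := fun h => hi0 (by simp [h])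
  set A := ∑ i, |x i| ^ (2 * q + 1) * (y i) ^ 2 with hAdef
  set B := ∑ i, |x i| ^ (2 * q) * (y i) ^ 2 with hBdef
  set C := ∑ i, (y i) ^ 2 with hCdef
  have hqR : (1 : ℝ) ≤ (q : ℝ) := by exact_mod_cast hq
  have h2q : (0 : ℝ) < 2 * (q : ℝ) := by linarith
  have h2q1 : (0 : ℝ) < 2 * (q : ℝ) + 1 := by linarith
  have hApos : 0 < A := by
    refine Finset.sum_pos' (fun i _ => by positivity) ⟨i0, Finset.mem_univ _, by positivity⟩
  have hBpos : 0 < B := by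
    refine Finset.sum_pos' (fun i _ => by positivity) ⟨i0, Finset.mem_univ _, by positivity⟩
  have hCpos : 0 < C := by
    refine Finset.sum_pos' (fun i _ => by positivity) ⟨j0, Finset.mem_univ _, by positivity⟩
  -- Hölder with p = (2q+1)/(2q)
  set p : ℝ := (2 * (q : ℝ) + 1) / (2 * (q : ℝ)) with hpdef
  have hp1 : (1 : ℝ) ≤ p := by
    rw [hpdef, le_div_iff₀ h2q]; linarith
  have key := Real.inner_le_weight_mul_Lp_of_nonneg Finset.univ hp1
      (fun i => (y i) ^ 2) (fun i => |x i| ^ (2 * q))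
      (fun i => sq_nonneg _) (fun i => by positivity)
  have hpow : ∀ i : Fin n, (y i) ^ 2 * (|x i| ^ (2 * q)) ^ p
      = |x i| ^ (2 * q + 1) * (y i) ^ 2 := by
    intro i
    rcases eq_or_ne (x i) 0 with h | h
    · have hp0 : p ≠ 0 := by positivity
      have h1 : 2 * q ≠ 0 := by omega
      have h2 : 2 * q + 1 ≠ 0 := by omega
      simp [h, zero_pow h1, zero_pow h2, Real.zero_rpow hp0]
    · have hxpos : (0 : ℝ) < |x i| := abs_pos.mpr h
      rw [← Real.rpow_natCast |x i| (2 * q), ← Real.rpow_mul hxpos.le]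
      have : ((2 * q : ℕ) : ℝ) * p = ((2 * q + 1 : ℕ) : ℝ) := by
        rw [hpdef]; push_cast; field_simp
      rw [this, Real.rpow_natCast]
      ring
  have hinv : 1 - p⁻¹ = 1 / (2 * (q : ℝ) + 1) := by
    rw [hpdef]; field_simp; ring
  have hpinv : p⁻¹ = (2 * (q : ℝ)) / (2 * (q : ℝ) + 1) := by
    rw [hpdef]; field_simp
  have key2 : B ≤ C ^ (1 / (2 * (q : ℝ) + 1)) * A ^ ((2 * (q : ℝ)) / (2 * (q : ℝ) + 1)) := by
    calc B = ∑ i, (y i) ^ 2 * |x i| ^ (2 * q) := by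
            rw [hBdef]; exact Finset.sum_congr rfl fun i _ => mul_comm _ _
      _ ≤ (∑ i, (y i) ^ 2) ^ (1 - p⁻¹) * (∑ i, (y i) ^ 2 * (|x i| ^ (2 * q)) ^ p) ^ p⁻¹ := key
      _ = C ^ (1 / (2 * (q : ℝ) + 1)) * A ^ ((2 * (q : ℝ)) / (2 * (q : ℝ) + 1)) := by
          rw [hinv, hpinv, hAdef]
          congr 2
          exact Finset.sum_congr rfl fun i _ => hpow i
  -- Raise to the power 2q+1 : B ^ (2q+1) ≤ C * A ^ (2q)
  have key3 : B ^ (2 * (q : ℝ) + 1) ≤ C * A ^ (2 * (q : ℝ)) := by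
    have h := Real.rpow_le_rpow hBpos.le key2 h2q1.le
    calc B ^ (2 * (q : ℝ) + 1)
        ≤ (C ^ (1 / (2 * (q : ℝ) + 1)) * A ^ ((2 * (q : ℝ)) / (2 * (q : ℝ) + 1)))
            ^ (2 * (q : ℝ) + 1) := h
      _ = C * A ^ (2 * (q : ℝ)) := by
          rw [Real.mul_rpow (by positivity) (by positivity),
            ← Real.rpow_mul hCpos.le, ← Real.rpow_mul hApos.le]
          rw [one_div_mul_cancel h2q1.ne', Real.rpow_one]
          congr 1
          field_simp
  -- B / C ≤ (A / B) ^ (2q)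
  have key4 : B / C ≤ (A / B) ^ (2 * (q : ℝ)) := by
    rw [Real.div_rpow hApos.le hBpos.le, div_le_div_iff₀ hCpos (by positivity)]
    calc B * B ^ (2 * (q : ℝ))
        = B ^ ((1:ℝ) + 2 * (q : ℝ)) := by
          rw [Real.rpow_add hBpos, Real.rpow_one]
      _ = B ^ (2 * (q : ℝ) + 1) := by ring_nf
      _ ≤ C * A ^ (2 * (q : ℝ)) := key3
      _ = A ^ (2 * (q : ℝ)) * C := mul_comm _ _
  -- conclude
  have hgoal : (B / C) ^ ((1 : ℝ) / (2 * (q : ℝ))) ≤ A / B := by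
    have h := Real.rpow_le_rpow (by positivity) key4 (by positivity :
      (0 : ℝ) ≤ (1 : ℝ) / (2 * (q : ℝ)))
    calc (B / C) ^ ((1 : ℝ) / (2 * (q : ℝ)))
        ≤ ((A / B) ^ (2 * (q : ℝ))) ^ ((1 : ℝ) / (2 * (q : ℝ))) := h
      _ = A / B := by
          rw [← Real.rpow_mul (by positivity), mul_one_div, div_self h2q.ne', Real.rpow_one]
  exact hgoal
end

section
/- Let α_1, …, α_n ≥ 0 and w_1, …, w_n ≥ 0 with ∑_i α_i^{2q} w_i > 0 and w_i > 0 for at least one i, and define R = (∑_i α_i^{2q+1} w_i)/(∑_i α_i^{2q} w_i). Then R^{2q+1} ≥ (∑_i α_i^{2q+1} w_i)/(∑_i w_i); in particular, if α_1 = 1 then R^{2q+1} ≥ w_1/(∑_i w_i). -/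
open Finset in
lemma key_holder (n m : ℕ) (hm : 1 ≤ m) (α w : Fin n → ℝ)
    (hα : ∀ i, 0 ≤ α i) (hw : ∀ i, 0 ≤ w i) :
    (∑ i, α i ^ m * w i) ^ (m + 1) ≤ (∑ i, α i ^ (m + 1) * w i) ^ m * (∑ i, w i) := by
  set A := ∑ i, α i ^ (m + 1) * w i with hA
  set B := ∑ i, α i ^ m * w i with hB
  set W := ∑ i, w i with hW
  have hA0 : 0 ≤ A := Finset.sum_nonneg fun i _ => mul_nonneg (pow_nonneg (hα i) _) (hw i)
  have hB0 : 0 ≤ B := Finset.sum_nonneg fun i _ => mul_nonneg (pow_nonneg (hα i) _) (hw i)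
  have hW0 : 0 ≤ W := Finset.sum_nonneg fun i _ => hw i
  have hp : (1:ℝ) ≤ ((m:ℝ)+1)/m := by
    rw [le_div_iff₀ (by positivity)]
    linarith
  have h := Real.inner_le_weight_mul_Lp_of_nonneg Finset.univ hp w (fun i => α i ^ m)
    hw (fun i => pow_nonneg (hα i) m)
  have hm0 : (m:ℝ) ≠ 0 := by positivity
  have hrw : ∀ i : Fin n, w i * (α i ^ m) ^ (((m:ℝ)+1)/m) = α i ^ (m+1) * w i := by
    intro i
    rw [← Real.rpow_natCast (α i) m, ← Real.rpow_natCast (α i) (m+1),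
      ← Real.rpow_mul (hα i), mul_comm]
    congr 1
    push_cast
    field_simp
  simp only [mul_comm (α _ ^ m) (w _), hrw] at h
  -- h : B ≤ W ^ (1 - p⁻¹) * A ^ p⁻¹ with p = (m+1)/m
  have hinv : (((m:ℝ)+1)/m)⁻¹ = (m:ℝ)/(m+1) := by
    rw [inv_div]
  have hone : 1 - (m:ℝ)/((m:ℝ)+1) = 1/((m:ℝ)+1) := by
    field_simp
    ring
  rw [hinv, hone] at h
  rw [show (∑ x : Fin n, w x * α x ^ m) = B by simp [hB, mul_comm]] at h
  -- now raise both sides to m+1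
  have h2 : B ^ (m+1) ≤ (W ^ ((1:ℝ)/((m:ℝ)+1)) * A ^ ((m:ℝ)/((m:ℝ)+1))) ^ (m+1) :=
    pow_le_pow_left₀ hB0 h _
  refine h2.trans_eq ?_
  rw [mul_pow, ← Real.rpow_natCast (W ^ ((1:ℝ)/((m:ℝ)+1))) (m+1),
    ← Real.rpow_natCast (A ^ ((m:ℝ)/((m:ℝ)+1))) (m+1),
    ← Real.rpow_mul hW0, ← Real.rpow_mul hA0]
  push_cast
  rw [one_div, inv_mul_cancel₀ (by positivity), div_mul_cancel₀ _ (by positivity),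
    Real.rpow_one, Real.rpow_natCast, mul_comm]

/-- Key inequality for the ratio R in the analysis of randomized SVD for PSD matrices. -/
theorem stmt_1 (n q : ℕ) (hq : 1 ≤ q) (α w : Fin n → ℝ)
    (hα : ∀ i, 0 ≤ α i) (hw : ∀ i, 0 ≤ w i)
    (hpos : 0 < ∑ i, α i ^ (2 * q) * w i) (hw1 : ∃ i, 0 < w i) (i₁ : Fin n) :
    ((∑ i, α i ^ (2 * q + 1) * w i) / (∑ i, α i ^ (2 * q) * w i)) ^ (2 * q + 1) ≥
        (∑ i, α i ^ (2 * q + 1) * w i) / (∑ i, w i) ∧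
      (α i₁ = 1 →
        ((∑ i, α i ^ (2 * q + 1) * w i) / (∑ i, α i ^ (2 * q) * w i)) ^ (2 * q + 1) ≥
          w i₁ / (∑ i, w i)) := by
  set m := 2 * q with hmdef
  have hm : 1 ≤ m := by omega
  set A := ∑ i, α i ^ (m + 1) * w i with hA
  set B := ∑ i, α i ^ m * w i with hB
  set W := ∑ i, w i with hW
  have hA0 : 0 ≤ A := Finset.sum_nonneg fun i _ => mul_nonneg (pow_nonneg (hα i) _) (hw i)
  have hWpos : 0 < W := by
    obtain ⟨j, hj⟩ := hw1
    exact Finset.sum_pos' (fun i _ => hw i) ⟨j, Finset.mem_univ j, hj⟩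
  have key := key_holder n m hm α w hα hw
  rw [← hA, ← hB, ← hW] at key
  have hApos : 0 < A := by
    rcases hA0.lt_or_eq with h | h
    · exact h
    · exfalso
      rw [← h] at key
      rw [zero_pow (by omega : m ≠ 0), zero_mul] at key
      nlinarith [pow_pos hpos (m + 1)]
  have hfirst : A / W ≤ (A / B) ^ (m + 1) := by
    rw [div_pow, div_le_div_iff₀ hWpos (pow_pos hpos _)]
    calc A * B ^ (m + 1) ≤ A * (A ^ m * W) :=
          mul_le_mul_of_nonneg_left key hA0
      _ = A ^ (m + 1) * W := by ring
  refine ⟨hfirst, fun h1 => le_trans ?_ hfirst⟩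
  have hwle : w i₁ ≤ A := by
    have := Finset.single_le_sum
      (f := fun i => α i ^ (m + 1) * w i)
      (fun i _ => mul_nonneg (pow_nonneg (hα i) _) (hw i)) (Finset.mem_univ i₁)
    simpa [h1] using this
  exact div_le_div_of_nonneg_right hwle hWpos.le
end

section
/- Let A be a real symmetric positive semidefinite n×n matrix with largest eigenvalue λ₁ > 0 and orthonormal eigenbasis u_1,…,u_n, let S ∈ ℝ^{n×d} with Sᵀu₁ ≠ 0, let q ≥ 1, and set Y = A^q S. Then max over nonzero v ∈ range(Y) of (vᵀAv)/(λ₁ vᵀv) raised to the power (2q+1) is at least cos²θ(u₁, S), where cos²θ(u₁, S) = max over nonzero w ∈ range(S) of ⟨u₁, w⟩²/‖w‖². -/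
open Matrix

/-- Symmetric matrices move across the dot product. -/
lemma aux_symm_flip {n : ℕ} (M : Matrix (Fin n) (Fin n) ℝ) (h : Mᵀ = M)
    (x y : Fin n → ℝ) : M.mulVec x ⬝ᵥ y = x ⬝ᵥ M.mulVec y := by
  rw [Matrix.dotProduct_mulVec, ← h, Matrix.mulVec_transpose]; rw [h]

/-- Powers of an eigen-relation. -/
lemma aux_pow_eig {n : ℕ} (A : Matrix (Fin n) (Fin n) ℝ) (lam : ℝ) (v : Fin n → ℝ)
    (h : A.mulVec v = lam • v) (p : ℕ) : (A ^ p).mulVec v = (lam ^ p) • v := by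
  induction p with
  | zero => simp
  | succ p ih =>
    rw [pow_succ, ← Matrix.mulVec_mulVec, h, Matrix.mulVec_smul, ih, smul_smul, ← pow_succ']

/-- Dot of eigenvector with a power applied to anything. -/
lemma aux_eig_dot {n : ℕ} (A : Matrix (Fin n) (Fin n) ℝ) (hA : A.IsSymm)
    (lam : ℝ) (v : Fin n → ℝ) (h : A.mulVec v = lam • v) (p : ℕ) (w : Fin n → ℝ) :
    v ⬝ᵥ (A ^ p).mulVec w = lam ^ p * (v ⬝ᵥ w) := by
  have hsp : (A ^ p)ᵀ = A ^ p := by rw [Matrix.transpose_pow, hA]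
  rw [← aux_symm_flip _ hsp, aux_pow_eig A lam v h p, smul_dotProduct, smul_eq_mul]

/-- Log-convexity of moment sequences. -/
lemma aux_logconvex {n : ℕ} (c lam : Fin n → ℝ) (hlam : ∀ i, 0 ≤ lam i) (k : ℕ) :
    (∑ i, c i ^ 2 * lam i ^ (k + 1)) ^ 2 ≤
      (∑ i, c i ^ 2 * lam i ^ k) * (∑ i, c i ^ 2 * lam i ^ (k + 2)) := by
  have key := Finset.sum_mul_sq_le_sq_mul_sq Finset.univ
    (fun i => c i * Real.sqrt (lam i ^ k)) (fun i => c i * Real.sqrt (lam i ^ (k + 2)))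
  have h1 : ∀ i : Fin n, (c i * Real.sqrt (lam i ^ k)) * (c i * Real.sqrt (lam i ^ (k + 2)))
      = c i ^ 2 * lam i ^ (k + 1) := by
    intro i
    have : Real.sqrt (lam i ^ k) * Real.sqrt (lam i ^ (k + 2)) = lam i ^ (k + 1) := by
      rw [← Real.sqrt_mul (pow_nonneg (hlam i) _), ← pow_add]
      have : k + (k + 2) = (k + 1) * 2 := by ring
      rw [this, pow_mul, Real.sqrt_sq (pow_nonneg (hlam i) _)]
    rw [show (c i * Real.sqrt (lam i ^ k)) * (c i * Real.sqrt (lam i ^ (k + 2)))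
        = c i ^ 2 * (Real.sqrt (lam i ^ k) * Real.sqrt (lam i ^ (k + 2))) by ring, this]
  have h2 : ∀ i : Fin n, (c i * Real.sqrt (lam i ^ k)) ^ 2 = c i ^ 2 * lam i ^ k := by
    intro i; rw [mul_pow, Real.sq_sqrt (pow_nonneg (hlam i) _)]
  have h3 : ∀ i : Fin n, (c i * Real.sqrt (lam i ^ (k + 2))) ^ 2 = c i ^ 2 * lam i ^ (k + 2) := by
    intro i; rw [mul_pow, Real.sq_sqrt (pow_nonneg (hlam i) _)]
  calc (∑ i, c i ^ 2 * lam i ^ (k + 1)) ^ 2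
      = (∑ i, (c i * Real.sqrt (lam i ^ k)) * (c i * Real.sqrt (lam i ^ (k + 2)))) ^ 2 := by
        congr 1; exact Finset.sum_congr rfl fun i _ => (h1 i).symm
    _ ≤ (∑ i, (c i * Real.sqrt (lam i ^ k)) ^ 2) * (∑ i, (c i * Real.sqrt (lam i ^ (k + 2))) ^ 2) :=
        key
    _ = (∑ i, c i ^ 2 * lam i ^ k) * (∑ i, c i ^ 2 * lam i ^ (k + 2)) := by
        rw [Finset.sum_congr rfl fun i _ => h2 i, Finset.sum_congr rfl fun i _ => h3 i]

/-- Cross-ratio monotonicity for a positive log-convex sequence. -/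
lemma aux_cross (T : ℕ → ℝ) (hpos : ∀ k, 0 < T k)
    (hlc : ∀ k, T (k + 1) ^ 2 ≤ T k * T (k + 2)) :
    ∀ k m, k ≤ m → T (k + 1) * T m ≤ T k * T (m + 1) := by
  intro k m hkm
  induction m, hkm using Nat.le_induction with
  | base => ring_nf; exact le_refl _
  | succ m hkm ih =>
    have hm1 : 0 < T (m + 1) := hpos _
    rw [← mul_le_mul_iff_of_pos_right hm1]
    calc T (k + 1) * T (m + 1) * T (m + 1) = T (k + 1) * T (m + 1) ^ 2 := by ring
      _ ≤ T (k + 1) * (T m * T (m + 2)) :=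
          mul_le_mul_of_nonneg_left (hlc m) (hpos _).le
      _ = (T (k + 1) * T m) * T (m + 2) := by ring
      _ ≤ (T k * T (m + 1)) * T (m + 2) :=
          mul_le_mul_of_nonneg_right ih (hpos _).le
      _ = T k * T (m + 1 + 1) * T (m + 1) := by ring

/-- The key power inequality: `T (m+1) * T m ^ (m+1) ≤ T (m+1) ^ (m+1) * T 0`. -/
lemma aux_power (T : ℕ → ℝ) (hpos : ∀ k, 0 < T k)
    (hlc : ∀ k, T (k + 1) ^ 2 ≤ T k * T (k + 2)) (m : ℕ) :
    T (m + 1) * T m ^ (m + 1) ≤ T (m + 1) ^ (m + 1) * T 0 := by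
  have key : ∀ j, j ≤ m + 1 → T j * T m ^ j ≤ T (m + 1) ^ j * T 0 := by
    intro j
    induction j with
    | zero => intro _; simp
    | succ j ih =>
      intro hj
      have hj' : j ≤ m := Nat.lt_succ_iff.mp hj
      have hcross := aux_cross T hpos hlc j m hj'
      have ihj := ih (Nat.le_of_succ_le hj)
      calc T (j + 1) * T m ^ (j + 1) = (T (j + 1) * T m) * T m ^ j := by ring
        _ ≤ (T j * T (m + 1)) * T m ^ j :=
            mul_le_mul_of_nonneg_right hcross (pow_nonneg (hpos _).le _)
        _ = T (m + 1) * (T j * T m ^ j) := by ring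
        _ ≤ T (m + 1) * (T (m + 1) ^ j * T 0) :=
            mul_le_mul_of_nonneg_left ihj (hpos _).le
        _ = T (m + 1) ^ (j + 1) * T 0 := by ring
  exact key (m + 1) le_rfl

/-- Dot product is additive in the left argument over sums. -/
lemma aux_sum_dotProduct {n : ℕ} (f : Fin n → Fin n → ℝ) (y : Fin n → ℝ) :
    (∑ i, f i) ⬝ᵥ y = ∑ i, f i ⬝ᵥ y := by
  simp only [dotProduct, Finset.sum_apply, Finset.sum_mul]
  exact Finset.sum_comm

/-- Self dot product of a nonzero real vector is positive. -/
lemma aux_dotpos {m : ℕ} (v : Fin m → ℝ) (hv : v ≠ 0) : 0 < v ⬝ᵥ v := by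
  have h2 : 0 ≤ v ⬝ᵥ v := Finset.sum_nonneg fun i _ => mul_self_nonneg _
  rcases h2.lt_or_eq with h3 | h3
  · exact h3
  · exact absurd ((dotProduct_self_eq_zero).mp h3.symm) hv

/-- The (2q+1)-th power of the best Rayleigh quotient over range(A^q S) is at least
the squared cosine of the angle between the top eigenvector and range(S). -/
theorem stmt_2 (n d q : ℕ) [NeZero n] (hq : 1 ≤ q)
    (A : Matrix (Fin n) (Fin n) ℝ) (hA : A.IsSymm) (hpsd : A.PosSemidef)
    (lam : Fin n → ℝ) (u : Fin n → (Fin n → ℝ))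
    (horth : ∀ i j, u i ⬝ᵥ u j = if i = j then (1 : ℝ) else 0)
    (heig : ∀ i, A.mulVec (u i) = lam i • u i)
    (hmono : Antitone lam) (hlampos : 0 < lam 0)
    (S : Matrix (Fin n) (Fin d) ℝ) (hS : Matrix.vecMul (u 0) S ≠ 0) :
    (sSup {r : ℝ | ∃ a : Fin d → ℝ, (A ^ q).mulVec (S.mulVec a) ≠ 0 ∧
        r = ((A ^ q).mulVec (S.mulVec a) ⬝ᵥ A.mulVec ((A ^ q).mulVec (S.mulVec a))) /
            (lam 0 * ((A ^ q).mulVec (S.mulVec a) ⬝ᵥ (A ^ q).mulVec (S.mulVec a)))}) ^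
        (2 * q + 1) ≥
      sSup {c : ℝ | ∃ a : Fin d → ℝ, S.mulVec a ≠ 0 ∧
        c = (u 0 ⬝ᵥ S.mulVec a) ^ 2 / (S.mulVec a ⬝ᵥ S.mulVec a)} := by
  have hAt : Aᵀ = A := hA
  have hlam_nonneg : ∀ i, 0 ≤ lam i := by
    intro i
    have h1 := hpsd.dotProduct_mulVec_nonneg (u i)
    rw [heig i] at h1
    simp only [star_trivial, dotProduct_smul, smul_eq_mul, horth i i] at h1
    simpa using h1
  have hlam_le : ∀ i, lam i ≤ lam 0 := fun i => hmono (Fin.zero_le i)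
  -- orthonormal decomposition
  have hdecomp : ∀ w : Fin n → ℝ, ∑ i, (u i ⬝ᵥ w) • u i = w := by
    intro w
    have hUUt : (Matrix.of u) * (Matrix.of u)ᵀ = 1 := by
      ext i j
      simp only [Matrix.mul_apply, Matrix.transpose_apply, Matrix.of_apply, Matrix.one_apply]
      simpa [dotProduct] using horth i j
    have hUtU : (Matrix.of u)ᵀ * (Matrix.of u) = 1 := mul_eq_one_comm.mp hUUt
    funext j
    have key : ((Matrix.of u)ᵀ *ᵥ ((Matrix.of u) *ᵥ w)) j = w j := by
      rw [Matrix.mulVec_mulVec, hUtU, Matrix.one_mulVec]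
    rw [← key]
    simp only [Finset.sum_apply, Pi.smul_apply, smul_eq_mul, Matrix.mulVec,
      dotProduct, Matrix.transpose_apply, Matrix.of_apply]
    exact Finset.sum_congr rfl fun i _ => mul_comm _ _
  have hmaster : ∀ (w : Fin n → ℝ) (p : ℕ),
      w ⬝ᵥ (A ^ p).mulVec w = ∑ i, (u i ⬝ᵥ w) ^ 2 * lam i ^ p := by
    intro w p
    have hrw : (∑ i, (u i ⬝ᵥ w) • u i) ⬝ᵥ (A ^ p).mulVec w = w ⬝ᵥ (A ^ p).mulVec w := by
      rw [hdecomp w]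
    rw [← hrw, aux_sum_dotProduct]
    refine Finset.sum_congr rfl fun i _ => ?_
    rw [smul_dotProduct, smul_eq_mul, aux_eig_dot A hA (lam i) (u i) (heig i) p w]
    ring
  have hvdots : ∀ (w : Fin n → ℝ) (p p' : ℕ),
      ((A ^ p).mulVec w) ⬝ᵥ ((A ^ p').mulVec w) = ∑ i, (u i ⬝ᵥ w) ^ 2 * lam i ^ (p + p') := by
    intro w p p'
    have hsp : (A ^ p)ᵀ = A ^ p := by rw [Matrix.transpose_pow, hAt]
    rw [aux_symm_flip _ hsp, Matrix.mulVec_mulVec, ← pow_add, hmaster]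
  -- the T sequence for a given coefficient vector
  set T : (Fin d → ℝ) → ℕ → ℝ := fun a k => ∑ i, (u i ⬝ᵥ S.mulVec a) ^ 2 * lam i ^ k with hT
  set LS := {r : ℝ | ∃ a : Fin d → ℝ, (A ^ q).mulVec (S.mulVec a) ≠ 0 ∧
        r = ((A ^ q).mulVec (S.mulVec a) ⬝ᵥ A.mulVec ((A ^ q).mulVec (S.mulVec a))) /
            (lam 0 * ((A ^ q).mulVec (S.mulVec a) ⬝ᵥ (A ^ q).mulVec (S.mulVec a)))} with hLS
  -- value of elements of LS
  have hval : ∀ a : Fin d → ℝ,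
      ((A ^ q).mulVec (S.mulVec a) ⬝ᵥ A.mulVec ((A ^ q).mulVec (S.mulVec a))) /
        (lam 0 * ((A ^ q).mulVec (S.mulVec a) ⬝ᵥ (A ^ q).mulVec (S.mulVec a)))
      = T a (2 * q + 1) / (lam 0 * T a (2 * q)) := by
    intro a
    have h1 : (A ^ q).mulVec (S.mulVec a) ⬝ᵥ A.mulVec ((A ^ q).mulVec (S.mulVec a))
        = T a (2 * q + 1) := by
      generalize hw : S.mulVec a = w
      rw [Matrix.mulVec_mulVec, ← pow_succ', hvdots]
      simp only [hT, ← hw, show q + (q + 1) = 2 * q + 1 by omega]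
    have h2 : (A ^ q).mulVec (S.mulVec a) ⬝ᵥ (A ^ q).mulVec (S.mulVec a) = T a (2 * q) := by
      rw [hvdots]
      simp only [hT, show q + q = 2 * q by omega]
    rw [h1, h2]
  have hTnonneg : ∀ a k, 0 ≤ T a k := fun a k =>
    Finset.sum_nonneg fun i _ => mul_nonneg (sq_nonneg _) (pow_nonneg (hlam_nonneg i) _)
  -- every element of LS lies in [0, 1]
  have hmem_nonneg : ∀ r ∈ LS, 0 ≤ r := by
    rintro r ⟨a, hv, rfl⟩
    rw [hval a]
    have hpos : 0 < T a (2 * q) := by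
      have := aux_dotpos _ hv
      rwa [hvdots, show q + q = 2 * q by omega] at this
    exact div_nonneg (hTnonneg a _) (mul_pos hlampos hpos).le
  have hmem_le_one : ∀ r ∈ LS, r ≤ 1 := by
    rintro r ⟨a, hv, rfl⟩
    rw [hval a]
    have hpos : 0 < T a (2 * q) := by
      have := aux_dotpos _ hv
      rwa [hvdots, show q + q = 2 * q by omega] at this
    rw [div_le_one (mul_pos hlampos hpos)]
    simp only [hT, Finset.mul_sum]
    refine Finset.sum_le_sum fun i _ => ?_
    have : lam i ^ (2 * q + 1) = lam i * lam i ^ (2 * q) := by rw [← pow_succ']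
    rw [this]
    have hstep : lam i * lam i ^ (2 * q) ≤ lam 0 * lam i ^ (2 * q) :=
      mul_le_mul_of_nonneg_right (hlam_le i) (pow_nonneg (hlam_nonneg i) _)
    nlinarith [sq_nonneg (u i ⬝ᵥ S.mulVec a), pow_nonneg (hlam_nonneg i) (2 * q)]
  have hbdd : BddAbove LS := ⟨1, fun r hr => hmem_le_one r hr⟩
  -- a good witness
  have hwitness : ∃ a : Fin d → ℝ, u 0 ⬝ᵥ S.mulVec a ≠ 0 := by
    refine ⟨Matrix.vecMul (u 0) S, ?_⟩
    rw [Matrix.dotProduct_mulVec]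
    exact ne_of_gt (aux_dotpos _ hS)
  obtain ⟨a₀, ha₀⟩ := hwitness
  -- if the top coefficient is nonzero then the power iterate is nonzero
  have hv_ne : ∀ a : Fin d → ℝ, u 0 ⬝ᵥ S.mulVec a ≠ 0 → (A ^ q).mulVec (S.mulVec a) ≠ 0 := by
    intro a ha hcontra
    have := aux_eig_dot A hA (lam 0) (u 0) (heig 0) q (S.mulVec a)
    rw [hcontra] at this
    simp only [dotProduct_zero] at this
    exact ha (by
      have hl : lam 0 ^ q ≠ 0 := pow_ne_zero _ (ne_of_gt hlampos)
      field_simp at this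
      exact (mul_eq_zero.mp this.symm).resolve_left hl)
  have hsup_nonneg : 0 ≤ sSup LS := by
    have hmem : (T a₀ (2 * q + 1) / (lam 0 * T a₀ (2 * q))) ∈ LS := by
      refine ⟨a₀, hv_ne a₀ ha₀, ?_⟩
      rw [hval a₀]
    calc (0 : ℝ) ≤ T a₀ (2 * q + 1) / (lam 0 * T a₀ (2 * q)) :=
          hmem_nonneg _ hmem
      _ ≤ sSup LS := le_csSup hbdd hmem
  -- reduce to an elementwise bound
  rw [ge_iff_le]
  refine Real.sSup_le ?_ (pow_nonneg hsup_nonneg _)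
  rintro c ⟨a, hSa, rfl⟩
  by_cases hc0 : u 0 ⬝ᵥ S.mulVec a = 0
  · rw [hc0]
    rw [show (0:ℝ) ^ 2 / (S.mulVec a ⬝ᵥ S.mulVec a) = 0 by simp]
    exact pow_nonneg hsup_nonneg _
  · -- main case
    have hvne := hv_ne a hc0
    have hTpos : ∀ k, 0 < T a k := by
      intro k
      have hterm : 0 < (u 0 ⬝ᵥ S.mulVec a) ^ 2 * lam 0 ^ k := by positivity
      refine lt_of_lt_of_le hterm ?_
      exact Finset.single_le_sum (f := fun i => (u i ⬝ᵥ S.mulVec a) ^ 2 * lam i ^ k)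
        (fun i _ => mul_nonneg (sq_nonneg _) (pow_nonneg (hlam_nonneg i) _)) (Finset.mem_univ 0)
    have hlc : ∀ k, T a (k + 1) ^ 2 ≤ T a k * T a (k + 2) :=
      fun k => aux_logconvex _ _ hlam_nonneg k
    have hkey := aux_power (T a) hTpos hlc (2 * q)
    have hterm1 : (u 0 ⬝ᵥ S.mulVec a) ^ 2 * lam 0 ^ (2 * q + 1) ≤ T a (2 * q + 1) :=
      Finset.single_le_sum (f := fun i => (u i ⬝ᵥ S.mulVec a) ^ 2 * lam i ^ (2 * q + 1))
        (fun i _ => mul_nonneg (sq_nonneg _) (pow_nonneg (hlam_nonneg i) _)) (Finset.mem_univ 0)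
    -- the Rayleigh quotient for a is in LS
    have hra_mem : T a (2 * q + 1) / (lam 0 * T a (2 * q)) ∈ LS :=
      ⟨a, hvne, by rw [hval a]⟩
    have hra_le : T a (2 * q + 1) / (lam 0 * T a (2 * q)) ≤ sSup LS := le_csSup hbdd hra_mem
    have hra_nonneg : 0 ≤ T a (2 * q + 1) / (lam 0 * T a (2 * q)) := hmem_nonneg _ hra_mem
    have hw0 : S.mulVec a ⬝ᵥ S.mulVec a = T a 0 := by
      have := hmaster (S.mulVec a) 0
      rw [pow_zero, Matrix.one_mulVec] at this
      simpa [hT] using this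
    rw [hw0]
    calc (u 0 ⬝ᵥ S.mulVec a) ^ 2 / T a 0
        ≤ (T a (2 * q + 1) / (lam 0 * T a (2 * q))) ^ (2 * q + 1) := by
          rw [div_pow, div_le_div_iff₀ (hTpos 0) (pow_pos (mul_pos hlampos (hTpos _)) _)]
          have hexp : (lam 0 * T a (2 * q)) ^ (2 * q + 1)
              = lam 0 ^ (2 * q + 1) * T a (2 * q) ^ (2 * q + 1) := mul_pow _ _ _
          rw [hexp]
          calc (u 0 ⬝ᵥ S.mulVec a) ^ 2 * (lam 0 ^ (2 * q + 1) * T a (2 * q) ^ (2 * q + 1))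
              = ((u 0 ⬝ᵥ S.mulVec a) ^ 2 * lam 0 ^ (2 * q + 1)) * T a (2 * q) ^ (2 * q + 1) := by
                ring
            _ ≤ T a (2 * q + 1) * T a (2 * q) ^ (2 * q + 1) :=
                mul_le_mul_of_nonneg_right hterm1 (pow_nonneg (hTpos _).le _)
            _ ≤ T a (2 * q + 1) ^ (2 * q + 1) * T a 0 := hkey
      _ ≤ (sSup LS) ^ (2 * q + 1) :=
          pow_le_pow_left₀ hra_nonneg hra_le _
end

section
/- Fix q ≥ 1 and 0 < α < 1, and let A be the n×n diagonal matrix with A₁₁ = 1 and A_{ii} = α for i ≥ 2. For any S ∈ ℝ^{n×d} and any a ∈ ℝ^d with A^q S a ≠ 0, the Rayleigh-quotient ratio R_a = ((Sa)ᵀA^{2q+1}(Sa))/((Sa)ᵀA^{2q}(Sa)) satisfies R_a ≤ α^{−2q}·cos²θ(e₁, S) + α, where e₁ is the first standard basis vector and cos²θ(e₁,S) = max_{b: Sb≠0} ⟨e₁, Sb⟩²/‖Sb‖₂². -/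
open Matrix

private lemma dp_pos {m : ℕ} {w : Fin m → ℝ} (hw : w ≠ 0) : 0 < w ⬝ᵥ w := by
  have h1 : 0 ≤ w ⬝ᵥ w := Finset.sum_nonneg fun i _ => mul_self_nonneg _
  rcases h1.lt_or_eq with h | h
  · exact h
  · exact absurd (dotProduct_self_eq_zero.mp h.symm) hw

/-- Deterministic core of the tightness construction: on the diagonal matrix with one
eigenvalue 1 and the rest α, the Rayleigh ratio is at most α^{-2q}·cos²θ(e₁,S) + α. -/
theorem stmt_13 (n d q : ℕ) [NeZero n] (hq : 1 ≤ q) (α : ℝ) (hα : α ∈ Set.Ioo (0 : ℝ) 1)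
    (S : Matrix (Fin n) (Fin d) ℝ) (a : Fin d → ℝ)
    (A : Matrix (Fin n) (Fin n) ℝ)
    (hA : A = Matrix.diagonal (fun i : Fin n => if i = 0 then (1 : ℝ) else α))
    (ha : (A ^ q).mulVec (S.mulVec a) ≠ 0) :
    (S.mulVec a ⬝ᵥ (A ^ (2 * q + 1)).mulVec (S.mulVec a)) /
        (S.mulVec a ⬝ᵥ (A ^ (2 * q)).mulVec (S.mulVec a)) ≤
      (α ^ (2 * q))⁻¹ *
          sSup {c : ℝ | ∃ b : Fin d → ℝ, S.mulVec b ≠ 0 ∧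
            c = (S.mulVec b 0) ^ 2 / (S.mulVec b ⬝ᵥ S.mulVec b)} + α := by
  obtain ⟨hα0, hα1⟩ := hα
  set v : Fin n → ℝ := S.mulVec a with hv_def
  have hv : v ≠ 0 := by
    intro h
    apply ha
    rw [hv_def] at h ⊢
    rw [h, Matrix.mulVec_zero]
  set T : ℝ := ∑ i ∈ Finset.univ.erase (0 : Fin n), (v i) ^ 2 with hT_def
  have hT : 0 ≤ T := Finset.sum_nonneg fun i _ => sq_nonneg _
  have hsum : ∀ k : ℕ, v ⬝ᵥ (A ^ k).mulVec v = v 0 ^ 2 + α ^ k * T := by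
    intro k
    have hAk : ∀ i, (A ^ k).mulVec v i
        = (if i = 0 then (1 : ℝ) else α) ^ k * v i := by
      intro i
      rw [hA, Matrix.diagonal_pow, Matrix.mulVec_diagonal, Pi.pow_apply]
    have : v ⬝ᵥ (A ^ k).mulVec v
        = ∑ i, (if i = 0 then (1 : ℝ) else α) ^ k * v i ^ 2 := by
      simp only [dotProduct, hAk]
      exact Finset.sum_congr rfl fun i _ => by ring
    rw [this, ← Finset.add_sum_erase _ _ (Finset.mem_univ (0 : Fin n))]
    rw [if_pos rfl, one_pow, one_mul]
    congr 1
    rw [hT_def, Finset.mul_sum]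
    refine Finset.sum_congr rfl fun i hi => ?_
    rw [if_neg (Finset.mem_erase.mp hi).1]
  have hvv : v ⬝ᵥ v = v 0 ^ 2 + T := by
    have h0 := hsum 0
    simpa using h0
  have hP : 0 < v 0 ^ 2 + T := by
    rw [← hvv]
    exact dp_pos hv
  set s : ℝ := α ^ (2 * q) with hs_def
  have hs0 : 0 < s := pow_pos hα0 _
  have hs1 : s ≤ 1 := pow_le_one₀ hα0.le hα1.le
  have hsinv : 1 ≤ s⁻¹ := one_le_inv_iff₀.mpr ⟨hs0, hs1⟩
  have hD : 0 < v 0 ^ 2 + s * T := by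
    have : s * (v 0 ^ 2 + T) ≤ v 0 ^ 2 + s * T := by
      nlinarith [sq_nonneg (v 0)]
    nlinarith
  -- core inequality
  have hcore : (v 0 ^ 2 + α ^ (2 * q + 1) * T) / (v 0 ^ 2 + s * T)
      ≤ s⁻¹ * (v 0 ^ 2 / (v 0 ^ 2 + T)) + α := by
    have h21 : α ^ (2 * q + 1) = s * α := by rw [hs_def, pow_succ]
    have hss : s * s⁻¹ = 1 := mul_inv_cancel₀ hs0.ne'
    rw [mul_div_assoc', div_add' _ _ _ hP.ne', div_le_div_iff₀ hD hP]
    have expand : s⁻¹ * v 0 ^ 2 + α * (v 0 ^ 2 + T) = s⁻¹ * v 0 ^ 2 + α * v 0 ^ 2 + α * T := by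
      ring
    rw [h21]
    have e1 : s⁻¹ * s * (v 0 ^ 2 * T) = v 0 ^ 2 * T := by
      rw [inv_mul_cancel₀ hs0.ne']; ring
    nlinarith [e1,
      mul_nonneg (sub_nonneg.2 hsinv) (mul_nonneg (sq_nonneg (v 0)) (sq_nonneg (v 0))),
      mul_nonneg hα0.le (mul_nonneg (sq_nonneg (v 0)) hT),
      mul_nonneg hα0.le (mul_nonneg (sq_nonneg (v 0)) (sq_nonneg (v 0)))]
  -- the sSup part
  set C : Set ℝ := {c : ℝ | ∃ b : Fin d → ℝ, S.mulVec b ≠ 0 ∧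
      c = (S.mulVec b 0) ^ 2 / (S.mulVec b ⬝ᵥ S.mulVec b)} with hC_def
  have hCb : BddAbove C := by
    refine ⟨1, ?_⟩
    rintro c ⟨b, hb, rfl⟩
    have hpos : 0 < S.mulVec b ⬝ᵥ S.mulVec b := dp_pos hb
    have hle : (S.mulVec b 0) ^ 2 ≤ S.mulVec b ⬝ᵥ S.mulVec b := by
      rw [dotProduct, sq]
      exact Finset.single_le_sum (f := fun i => S.mulVec b i * S.mulVec b i)
        (fun i _ => mul_self_nonneg _) (Finset.mem_univ 0)
    exact div_le_one_of_le₀ hle hpos.le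
  have hmem : v 0 ^ 2 / (v 0 ^ 2 + T) ∈ C := by
    refine ⟨a, hv, ?_⟩
    rw [← hv_def, hvv]
  have hcos : v 0 ^ 2 / (v 0 ^ 2 + T) ≤ sSup C := le_csSup hCb hmem
  calc v ⬝ᵥ (A ^ (2 * q + 1)).mulVec v / (v ⬝ᵥ (A ^ (2 * q)).mulVec v)
      = (v 0 ^ 2 + α ^ (2 * q + 1) * T) / (v 0 ^ 2 + s * T) := by
        rw [hsum, hsum]
    _ ≤ s⁻¹ * (v 0 ^ 2 / (v 0 ^ 2 + T)) + α := hcore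
    _ ≤ s⁻¹ * sSup C + α := by
        have := mul_le_mul_of_nonneg_left hcos (inv_pos.mpr hs0).le
        linarith
end
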